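/- arXiv:2501.11070 — 10 statements merged into one kernel-verified Lean document; each statement's English description precedes it below -/
import Mathlib

section
/- Let $(V,\rho,\alpha)$ be a representation of a Nijenhuis mock-Lie algebra $(\mathcal{A},[~,~],N)$. Define on $\mathcal{A}\oplus V$ the bracket $[x+u,y+v]_\star = [x,y]+\rho(x)v+\rho(y)u$ and the linear map $(N+\alpha)(x+u)=N(x)+\alpha(u)$. Then $(\mathcal{A}\oplus V, [~,~]_\star, N+\alpha)$ is a Nijenhuis mock-Lie algebra. -/
/-- The semi-direct product bracket `[x+u, y+v]_⋆ = [x,y] + ρ(x)v + ρ(y)u` on `A ⊕ V`. -/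
def starBracket {K A V : Type*} [Field K] [AddCommGroup A] [Module K A]
    [AddCommGroup V] [Module K V] (b : A →ₗ[K] A →ₗ[K] A)
    (ρ : A →ₗ[K] V →ₗ[K] V) (p q : A × V) : A × V :=
  (b p.1 q.1, ρ p.1 q.2 + ρ q.1 p.2)

/-- The map `(N+α)(x+u) = N(x) + α(u)` on `A ⊕ V`. -/
def sumMap {K A V : Type*} [Field K] [AddCommGroup A] [Module K A]
    [AddCommGroup V] [Module K V] (N : A →ₗ[K] A) (α : V →ₗ[K] V) (p : A × V) : A × V :=
  (N p.1, α p.2)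

/-- If `(V,ρ,α)` is a representation of the Nijenhuis mock-Lie algebra `(A,[,],N)`,
then `(A ⊕ V, [,]_⋆, N+α)` is a Nijenhuis mock-Lie algebra. -/
theorem stmt1 {K A V : Type*} [Field K] [CharZero K]
    [AddCommGroup A] [Module K A] [AddCommGroup V] [Module K V]
    (b : A →ₗ[K] A →ₗ[K] A) (N : A →ₗ[K] A)
    (ρ : A →ₗ[K] V →ₗ[K] V) (α : V →ₗ[K] V)
    (hcomm : ∀ x y : A, b x y = b y x)
    (hjac : ∀ x y z : A, b x (b y z) + b y (b z x) + b z (b x y) = 0)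
    (hN : ∀ x y : A, b (N x) (N y) + N (N (b x y)) = N (b (N x) y) + N (b x (N y)))
    (hrep : ∀ (x y : A) (v : V), ρ (b x y) v = - ρ x (ρ y v) - ρ y (ρ x v))
    (hα : ∀ (x : A) (v : V),
      ρ (N x) (α v) + α (α (ρ x v)) = α (ρ (N x) v) + α (ρ x (α v))) :
    (∀ p q : A × V, starBracket b ρ p q = starBracket b ρ q p) ∧
    (∀ p q r : A × V,
      starBracket b ρ p (starBracket b ρ q r) +
      starBracket b ρ q (starBracket b ρ r p) +
      starBracket b ρ r (starBracket b ρ p q) = 0) ∧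
    (∀ p q : A × V,
      starBracket b ρ (sumMap N α p) (sumMap N α q) +
        sumMap N α (sumMap N α (starBracket b ρ p q)) =
      sumMap N α (starBracket b ρ (sumMap N α p) q) +
        sumMap N α (starBracket b ρ p (sumMap N α q))) := by
  refine ⟨?_, ?_, ?_⟩
  · intro p q
    simp only [starBracket, Prod.mk.injEq]
    exact ⟨hcomm _ _, add_comm _ _⟩
  · intro p q r
    refine Prod.ext ?_ ?_ <;>
      simp only [starBracket, Prod.fst_add, Prod.snd_add, Prod.fst_zero,
        Prod.snd_zero, map_add, hrep]
    · exact hjac _ _ _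
    · abel
  · intro p q
    refine Prod.ext ?_ ?_ <;>
      simp only [starBracket, sumMap, Prod.fst_add, Prod.snd_add, map_add]
    · exact hN _ _
    · linear_combination (norm := abel) hα p.1 q.2 + hα q.1 p.2
end

section
/- Let $(\mathcal{A},[~,~],N)$ be a Nijenhuis mock-Lie algebra, $(V,\rho)$ a representation of $(\mathcal{A},[~,~])$, and $\beta:V\to V$ a linear map. Then $(V^*,\rho^*,\beta^*)$ is a representation of the Nijenhuis mock-Lie algebra $(\mathcal{A},[~,~],N)$ if and only if $\beta(\rho(N(x))v) + \rho(x)\beta^2(v) = \rho(N(x))\beta(v) + \beta(\rho(x)\beta(v))$ for all $x\in\mathcal{A}$, $v\in V$. -/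
open Module

/-- `(V^*, ρ^*, β^*)` is a representation of the Nijenhuis mock-Lie algebra `(A,[,],N)`
iff `β(ρ(N x)v) + ρ(x)β²(v) = ρ(N x)β(v) + β(ρ(x)β(v))` for all `x, v`. -/
theorem stmt3 {K A V : Type*} [Field K] [CharZero K]
    [AddCommGroup A] [Module K A] [AddCommGroup V] [Module K V]
    [FiniteDimensional K V]
    (b : A →ₗ[K] A →ₗ[K] A) (N : A →ₗ[K] A)
    (ρ : A →ₗ[K] V →ₗ[K] V) (β : V →ₗ[K] V)
    (hcomm : ∀ x y : A, b x y = b y x)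
    (hjac : ∀ x y z : A, b x (b y z) + b y (b z x) + b z (b x y) = 0)
    (hN : ∀ x y : A, b (N x) (N y) + N (N (b x y)) = N (b (N x) y) + N (b x (N y)))
    (hrep : ∀ (x y : A) (v : V), ρ (b x y) v = - ρ x (ρ y v) - ρ y (ρ x v)) :
    ((∀ (x y : A) (f : Dual K V),
        (ρ (b x y)).dualMap f =
          - (ρ x).dualMap ((ρ y).dualMap f) - (ρ y).dualMap ((ρ x).dualMap f)) ∧
     (∀ (x : A) (f : Dual K V),
        (ρ (N x)).dualMap (β.dualMap f) + β.dualMap (β.dualMap ((ρ x).dualMap f)) =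
          β.dualMap ((ρ (N x)).dualMap f) + β.dualMap ((ρ x).dualMap (β.dualMap f)))) ↔
    (∀ (x : A) (v : V),
      β (ρ (N x) v) + ρ x (β (β v)) = ρ (N x) (β v) + β (ρ x (β v))) := by
  constructor
  · rintro ⟨-, h2⟩ x v
    have key : ∀ f : Dual K V,
        f (β (ρ (N x) v) + ρ x (β (β v)) - (ρ (N x) (β v) + β (ρ x (β v)))) = 0 := by
      intro f
      have := congrArg (fun g : Dual K V => g v) (h2 x f)
      simp only [LinearMap.add_apply, LinearMap.dualMap_apply', LinearMap.comp_apply] at this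
      simp only [map_add, map_sub, this]
      ring
    have h0 := (Module.forall_dual_apply_eq_zero_iff K _).mp key
    exact sub_eq_zero.mp h0
  · intro h
    constructor
    · intro x y f
      ext v
      simp only [LinearMap.dualMap_apply', LinearMap.comp_apply, LinearMap.sub_apply,
        LinearMap.neg_apply, hrep x y v, map_sub, map_neg]
      ring
    · intro x f
      ext v
      simp only [LinearMap.add_apply, LinearMap.dualMap_apply', LinearMap.comp_apply]
      rw [← map_add, ← map_add, h x v]
end

section
/- Let $(\mathcal{A},\Delta)$ be a mock-Lie coalgebra and $\omega$ a skew-symmetric bilinear form on $\mathcal{A}$ which is a solution of the co-classical mock-Lie Yang-Baxter equation: $\omega(x_{(1)},y)\omega(x_{(2)},z) + \omega(x,z_{(1)})\omega(y,z_{(2)}) - \omega(x,y_{(1)})\omega(y_{(2)},z) = 0$ for all $x,y,z$. Then the multiplication $[x,y]_\omega = x_{(1)}\omega(x_{(2)},y) - y_{(1)}\omega(x,y_{(2)})$ gives a mock-Lie algebra structure on $\mathcal{A}$; in particular $[~,~]_\omega$ is commutative and satisfies the Jacobi identity $[x,[y,z]_\omega]_\omega + [y,[z,x]_\omega]_\omega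 + [z,[x,y]_\omega]_\omega = 0$. -/
open TensorProduct LinearMap Module

/-- Cocommutativity. -/
def IsCocomm {K A : Type*} [Field K] [AddCommGroup A] [Module K A]
    (Δ : A →ₗ[K] A ⊗[K] A) : Prop :=
  ∀ x : A, (TensorProduct.comm K A A) (Δ x) = Δ x

/-- The co-Jacobi identity. -/
def IsCoJacobi {K A : Type*} [Field K] [AddCommGroup A] [Module K A]
    (Δ : A →ₗ[K] A ⊗[K] A) : Prop :=
  ∀ x : A,
    (lTensor A Δ) (Δ x) +
    (TensorProduct.assoc K A A A) ((rTensor A Δ) (Δ x)) +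
    (TensorProduct.leftComm K A A A) ((lTensor A Δ) (Δ x)) = 0

/-- `f(w₁)·g(w₂)` for `w = w₁ ⊗ w₂ ∈ A ⊗ A`. -/
noncomputable def pair2 {K A : Type*} [Field K] [AddCommGroup A] [Module K A]
    (f g : Dual K A) (w : A ⊗[K] A) : K :=
  (TensorProduct.lid K K) ((TensorProduct.map f g) w)

/-- `[x,y]_ω = x₍₁₎ ω(x₍₂₎, y) - y₍₁₎ ω(x, y₍₂₎)`. -/
noncomputable def brW {K A : Type*} [Field K] [AddCommGroup A] [Module K A]
    (Δ : A →ₗ[K] A ⊗[K] A) (ω : A →ₗ[K] A →ₗ[K] K) (x y : A) : A :=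
  (TensorProduct.rid K A) ((lTensor A (ω.flip y)) (Δ x)) -
  (TensorProduct.rid K A) ((lTensor A (ω x)) (Δ y))



section myaux
variable {K A : Type*} [Field K] [AddCommGroup A] [Module K A]

noncomputable def myCv (f : A →ₗ[K] K) : A ⊗[K] A →ₗ[K] A :=
  (TensorProduct.rid K A).toLinearMap ∘ₗ lTensor A f

noncomputable def myCv' (f : A →ₗ[K] K) : A ⊗[K] A →ₗ[K] A :=
  (TensorProduct.lid K A).toLinearMap ∘ₗ rTensor A f

noncomputable def myPr (f g : A →ₗ[K] K) : A ⊗[K] A →ₗ[K] K :=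
  (TensorProduct.lid K K).toLinearMap ∘ₗ TensorProduct.map f g

noncomputable def myPhi (f g : A →ₗ[K] K) : A ⊗[K] (A ⊗[K] A) →ₗ[K] A :=
  (TensorProduct.rid K A).toLinearMap ∘ₗ lTensor A (myPr f g)

noncomputable def myPsi (f g : A →ₗ[K] K) : A ⊗[K] (A ⊗[K] A) →ₗ[K] A :=
  myCv' f ∘ₗ lTensor A (myCv g)

noncomputable def myCV2 (f : A →ₗ[K] K) : (A ⊗[K] A) ⊗[K] A →ₗ[K] A ⊗[K] A :=
  (TensorProduct.rid K (A ⊗[K] A)).toLinearMap ∘ₗ lTensor (A ⊗[K] A) f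

@[simp] lemma myCv_tmul (f : A →ₗ[K] K) (a b : A) :
    myCv f (a ⊗ₜ[K] b) = f b • a := by simp [myCv]

@[simp] lemma myCv'_tmul (f : A →ₗ[K] K) (a b : A) :
    myCv' f (a ⊗ₜ[K] b) = f a • b := by simp [myCv']

@[simp] lemma myPr_tmul (f g : A →ₗ[K] K) (a b : A) :
    myPr f g (a ⊗ₜ[K] b) = f a * g b := by
  simp [myPr, smul_eq_mul]

@[simp] lemma myPhi_tmul (f g : A →ₗ[K] K) (a : A) (s : A ⊗[K] A) :
    myPhi f g (a ⊗ₜ[K] s) = myPr f g s • a := by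
  simp [myPhi]

@[simp] lemma myPsi_tmul (f g : A →ₗ[K] K) (a : A) (s : A ⊗[K] A) :
    myPsi f g (a ⊗ₜ[K] s) = f a • myCv g s := by
  simp [myPsi, myCv']

@[simp] lemma myCV2_tmul (f : A →ₗ[K] K) (s : A ⊗[K] A) (b : A) :
    myCV2 f (s ⊗ₜ[K] b) = f b • s := by
  simp [myCV2]

lemma pair2_eq_myPr (f g : A →ₗ[K] K) (t : A ⊗[K] A) :
    pair2 f g t = myPr f g t := rfl

lemma myPr_neg_right (f g : A →ₗ[K] K) (t : A ⊗[K] A) :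
    myPr f (-g) t = - myPr f g t := by
  induction t using TensorProduct.induction_on with
  | zero => simp
  | tmul a b => simp [mul_comm]
  | add u v hu hv => simp [hu, hv]; ring

lemma myPr_neg_left (f g : A →ₗ[K] K) (t : A ⊗[K] A) :
    myPr (-f) g t = - myPr f g t := by
  induction t using TensorProduct.induction_on with
  | zero => simp
  | tmul a b => simp [mul_comm]
  | add u v hu hv => simp [hu, hv]; ring

lemma myCv_neg (f : A →ₗ[K] K) (t : A ⊗[K] A) :
    myCv (-f) t = - myCv f t := by
  induction t using TensorProduct.induction_on with
  | zero => simp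
  | tmul a b => simp
  | add u v hu hv => simp [hu, hv]; abel

lemma myPhi_neg_right (f g : A →ₗ[K] K) (t : A ⊗[K] (A ⊗[K] A)) :
    myPhi f (-g) t = - myPhi f g t := by
  induction t using TensorProduct.induction_on with
  | zero => simp
  | tmul a s => simp [myPr_neg_right]
  | add u v hu hv => simp [hu, hv]; abel

-- L7
lemma apply_myCv (f g : A →ₗ[K] K) (t : A ⊗[K] A) :
    f (myCv g t) = myPr f g t := by
  induction t using TensorProduct.induction_on with
  | zero => simp
  | tmul a b => simp [mul_comm]
  | add u v hu hv => simp [hu, hv]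

-- L4
lemma myPhi_lTensor (f g : A →ₗ[K] K) (D : A →ₗ[K] A ⊗[K] A) (t : A ⊗[K] A) :
    myPhi f g ((lTensor A D) t) = myCv (myPr f g ∘ₗ D) t := by
  induction t using TensorProduct.induction_on with
  | zero => simp
  | tmul a b => simp
  | add u v hu hv => simp [hu, hv]

-- L3
lemma myPhi_leftComm (f g : A →ₗ[K] K) (t : A ⊗[K] (A ⊗[K] A)) :
    myPhi f g ((TensorProduct.leftComm K A A A) t) = myPsi f g t := by
  induction t using TensorProduct.induction_on with
  | zero => simp
  | tmul a s =>
    induction s using TensorProduct.induction_on with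
    | zero => simp
    | tmul b c => simp [leftComm_tmul, smul_smul, mul_comm]
    | add u v hu hv => simp only [tmul_add, map_add, hu, hv]
  | add u v hu hv => simp [hu, hv]

-- S2
lemma myPhi_assoc_tmul (f g : A →ₗ[K] K) (s : A ⊗[K] A) (a : A) :
    myPhi g f ((TensorProduct.assoc K A A A) (s ⊗ₜ[K] a)) = f a • myCv g s := by
  induction s using TensorProduct.induction_on with
  | zero => simp
  | tmul b c => simp [assoc_tmul, smul_smul, mul_comm]
  | add u v hu hv => simp only [add_tmul, map_add, hu, hv, smul_add]

-- L6
lemma myPsi_lTensor (f g : A →ₗ[K] K) (D : A →ₗ[K] A ⊗[K] A) (t : A ⊗[K] A) :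
    myPsi f g ((lTensor A D) t) =
      myPhi g f ((TensorProduct.assoc K A A A)
        ((rTensor A D) ((TensorProduct.comm K A A) t))) := by
  induction t using TensorProduct.induction_on with
  | zero => simp
  | tmul a b => simp [comm_tmul, rTensor_tmul, myPhi_assoc_tmul]
  | add u v hu hv => simp only [map_add, hu, hv]

-- L8
lemma map_myCv (D : A →ₗ[K] A ⊗[K] A) (f : A →ₗ[K] K) (t : A ⊗[K] A) :
    D (myCv f t) = myCV2 f ((rTensor A D) t) := by
  induction t using TensorProduct.induction_on with
  | zero => simp
  | tmul a b => simp
  | add u v hu hv => simp [hu, hv]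

-- L9
lemma myCv_myCV2 (f g : A →ₗ[K] K) (s : (A ⊗[K] A) ⊗[K] A) :
    myCv g (myCV2 f s) = myPhi g f ((TensorProduct.assoc K A A A) s) := by
  induction s using TensorProduct.induction_on with
  | zero => simp
  | tmul m c =>
    rw [myCV2_tmul, map_smul, myPhi_assoc_tmul]
  | add u v hu hv => simp only [map_add, hu, hv]

lemma brW_eq (Δ : A →ₗ[K] A ⊗[K] A) (ω : A →ₗ[K] A →ₗ[K] K) (x y : A) :
    brW Δ ω x y = myCv (ω.flip y) (Δ x) - myCv (ω x) (Δ y) := rfl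

end myaux

lemma myFlipEq {K A : Type*} [Field K] [AddCommGroup A] [Module K A]
    (ω : A →ₗ[K] A →ₗ[K] K) (hskew : ∀ x y : A, ω x y = - ω y x) (u : A) :
    ω.flip u = -(ω u) := by
  ext a; simp [flip_apply, hskew a u]

lemma myMain {K A : Type*} [Field K] [AddCommGroup A] [Module K A]
    (Δ : A →ₗ[K] A ⊗[K] A) (ω : A →ₗ[K] A →ₗ[K] K)
    (hcocomm : IsCocomm Δ) (hcojac : IsCoJacobi Δ)
    (hskew : ∀ x y : A, ω x y = - ω y x)
    (hybe : ∀ x y z : A,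
      pair2 (ω.flip y) (ω.flip z) (Δ x) + pair2 (ω x) (ω y) (Δ z) -
        pair2 (ω x) (ω.flip z) (Δ y) = 0)
    (x y z : A) :
    brW Δ ω x (brW Δ ω y z) =
      -(myPhi (ω y) (ω z) ((TensorProduct.assoc K A A A) ((rTensor A Δ) (Δ x))))
      - myPhi (ω z) (ω y) ((TensorProduct.assoc K A A A) ((rTensor A Δ) (Δ x)))
      + myPhi (ω x) (ω z) ((TensorProduct.assoc K A A A) ((rTensor A Δ) (Δ y)))
      + myPhi (ω x) (ω y) ((TensorProduct.assoc K A A A) ((rTensor A Δ) (Δ z))) := by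
  have hflip := myFlipEq ω hskew
  -- the functional ω(·, [y,z]) equals the YBE contraction functional
  have hfun : ω.flip (brW Δ ω y z) = myPr (ω y) (ω z) ∘ₗ Δ := by
    ext a
    have hy := hybe a y z
    rw [pair2_eq_myPr, pair2_eq_myPr, pair2_eq_myPr] at hy
    simp only [flip_apply, coe_comp, Function.comp_apply]
    rw [brW_eq, map_sub, apply_myCv, apply_myCv]
    have hrw : myPr (ω y) (ω z) (Δ a) = myPr (ω.flip y) (ω.flip z) (Δ a) := by
      rw [hflip y, hflip z, myPr_neg_left, myPr_neg_right, neg_neg]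
    rw [hrw]; linear_combination -hy
  -- co-Jacobi contracted with Φ (ω y) (ω z)
  have hc := congrArg (myPhi (ω y) (ω z)) (hcojac x)
  simp only [map_add, map_zero] at hc
  rw [myPhi_leftComm, myPsi_lTensor, hcocomm x] at hc
  -- first term of the bracket
  have h1 : myCv (ω.flip (brW Δ ω y z)) (Δ x) =
      myPhi (ω y) (ω z) ((lTensor A Δ) (Δ x)) := by
    rw [hfun, ← myPhi_lTensor]
  -- second term of the bracket
  have h2 : myCv (ω x) (Δ (brW Δ ω y z)) =
      -(myPhi (ω x) (ω z) ((TensorProduct.assoc K A A A) ((rTensor A Δ) (Δ y))))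
      - myPhi (ω x) (ω y) ((TensorProduct.assoc K A A A) ((rTensor A Δ) (Δ z))) := by
    rw [brW_eq, map_sub, map_sub, map_myCv Δ (ω.flip z) (Δ y),
      map_myCv Δ (ω y) (Δ z), myCv_myCV2, myCv_myCV2, hflip z, myPhi_neg_right]
    try abel
  rw [brW_eq, h1, h2, ← sub_eq_zero, ← hc]
  try abel

/-- A skew-symmetric solution of the co-classical mock-Lie Yang-Baxter equation yields a
mock-Lie algebra structure `[,]_ω` on `A`. -/
theorem stmt6 {K A : Type*} [Field K] [CharZero K]
    [AddCommGroup A] [Module K A]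
    (Δ : A →ₗ[K] A ⊗[K] A) (ω : A →ₗ[K] A →ₗ[K] K)
    (hcocomm : IsCocomm Δ) (hcojac : IsCoJacobi Δ)
    (hskew : ∀ x y : A, ω x y = - ω y x)
    (hybe : ∀ x y z : A,
      pair2 (ω.flip y) (ω.flip z) (Δ x) + pair2 (ω x) (ω y) (Δ z) -
        pair2 (ω x) (ω.flip z) (Δ y) = 0) :
    (∀ x y : A, brW Δ ω x y = brW Δ ω y x) ∧
    (∀ x y z : A,
      brW Δ ω x (brW Δ ω y z) + brW Δ ω y (brW Δ ω z x) +
        brW Δ ω z (brW Δ ω x y) = 0) := by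
  have hflip := myFlipEq ω hskew
  refine ⟨fun x y => ?_, fun x y z => ?_⟩
  · rw [brW_eq, brW_eq, hflip y, hflip x, myCv_neg, myCv_neg]
    abel
  · rw [myMain Δ ω hcocomm hcojac hskew hybe x y z,
      myMain Δ ω hcocomm hcojac hskew hybe y z x,
      myMain Δ ω hcocomm hcojac hskew hybe z x y]
    abel
end

section
/- Let $(\mathcal{A},\Delta)$ be a mock-Lie coalgebra, $\omega$ a skew-symmetric bilinear form, and $[x,y]_\omega = x_{(1)}\omega(x_{(2)},y) - y_{(1)}\omega(x,y_{(2)})$. If $\omega$ satisfies $\omega([x,y]_\omega, z) = -\omega(x,z_{(1)})\omega(y,z_{(2)})$ for all $x,y,z$, then $\omega$ solves the co-classical mock-Lie Yang-Baxter equation $\omega(x_{(1)},y)\omega(x_{(2)},z) + \omega(x,z_{(1)})\omega(y,z_{(2)}) - \omega(x,y_{(1)})\omega(y_{(2)},z) = 0$, and conversely. -/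
open TensorProduct LinearMap Module

lemma pair2_aux {K A : Type*} [Field K] [AddCommGroup A] [Module K A]
    (ω : A →ₗ[K] A →ₗ[K] K) (f : Dual K A) (z : A) (w : A ⊗[K] A) :
    ω ((TensorProduct.rid K A) ((lTensor A f) w)) z = pair2 (ω.flip z) f w := by
  induction w using TensorProduct.induction_on with
  | zero => simp [pair2]
  | tmul a b => simp [pair2, TensorProduct.smul_tmul', mul_comm]
  | add u v hu hv => simp [map_add, hu, hv, pair2] at *

lemma pair2_comm {K A : Type*} [Field K] [AddCommGroup A] [Module K A]
    (f g : Dual K A) (w : A ⊗[K] A) :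
    pair2 f g ((TensorProduct.comm K A A) w) = pair2 g f w := by
  induction w using TensorProduct.induction_on with
  | zero => simp [pair2]
  | tmul a b => simp [pair2, mul_comm]
  | add u v hu hv => simp only [pair2, map_add] at *; simp [hu, hv]

lemma brW_key {K A : Type*} [Field K] [AddCommGroup A] [Module K A]
    (Δ : A →ₗ[K] A ⊗[K] A) (ω : A →ₗ[K] A →ₗ[K] K)
    (hcocomm : IsCocomm Δ) (x y z : A) :
    ω (brW Δ ω x y) z =
      pair2 (ω.flip y) (ω.flip z) (Δ x) - pair2 (ω x) (ω.flip z) (Δ y) := by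
  have h1 : pair2 (ω.flip z) (ω.flip y) (Δ x) = pair2 (ω.flip y) (ω.flip z) (Δ x) := by
    rw [← hcocomm x, pair2_comm, hcocomm]
  have h2 : pair2 (ω.flip z) (ω x) (Δ y) = pair2 (ω x) (ω.flip z) (Δ y) := by
    rw [← hcocomm y, pair2_comm, hcocomm]
  simp [brW, map_sub, pair2_aux, h1, h2]

/-- `ω([x,y]_ω, z) = -ω(x,z₍₁₎)ω(y,z₍₂₎)` holds for all `x,y,z` iff `ω` solves the
co-classical mock-Lie Yang-Baxter equation. -/
theorem stmt7 {K A : Type*} [Field K] [CharZero K]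
    [AddCommGroup A] [Module K A]
    (Δ : A →ₗ[K] A ⊗[K] A) (ω : A →ₗ[K] A →ₗ[K] K)
    (hcocomm : IsCocomm Δ) (hcojac : IsCoJacobi Δ)
    (hskew : ∀ x y : A, ω x y = - ω y x) :
    (∀ x y z : A, ω (brW Δ ω x y) z = - pair2 (ω x) (ω y) (Δ z)) ↔
    (∀ x y z : A,
      pair2 (ω.flip y) (ω.flip z) (Δ x) + pair2 (ω x) (ω y) (Δ z) -
        pair2 (ω x) (ω.flip z) (Δ y) = 0) := by
  constructor
  · intro h x y z
    have := h x y z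
    rw [brW_key Δ ω hcocomm] at this
    linear_combination this
  · intro h x y z
    have := h x y z
    rw [brW_key Δ ω hcocomm]
    linear_combination this
end

section
/- Let $(\mathcal{A},\Delta)$ be a mock-Lie coalgebra and $\omega$ a skew-symmetric bilinear form such that $(\mathcal{A},\Delta,\omega,[~,~]_\omega)$ is a dual quasitriangular mock-Lie bialgebra, i.e. $\omega$ solves the co-classical mock-Lie Yang-Baxter equation and $[x,y]_\omega = x_{(1)}\omega(x_{(2)},y)-y_{(1)}\omega(x,y_{(2)})$. Then $\omega$ is a symplectic form on the mock-Lie algebra $(\mathcal{A},[~,~]_\omega)$, i.e. $\omega([x,y]_\omega,z) + \omega([y,z]_\omega,x) + \omega([z,x]_\omega,y) = 0$ for all $x,y,z\in\mathcal{A}$. -/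
open TensorProduct LinearMap Module

lemma pair2_neg_left {K A : Type*} [Field K] [AddCommGroup A] [Module K A]
    (f g : Dual K A) (w : A ⊗[K] A) : pair2 (-f) g w = - pair2 f g w := by
  induction w using TensorProduct.induction_on with
  | zero => simp [pair2]
  | tmul a b => simp [pair2]
  | add u v hu hv => simp [pair2, map_add] at hu hv ⊢; rw [hu, hv]; ring

lemma pair2_neg_right {K A : Type*} [Field K] [AddCommGroup A] [Module K A]
    (f g : Dual K A) (w : A ⊗[K] A) : pair2 f (-g) w = - pair2 f g w := by
  induction w using TensorProduct.induction_on with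
  | zero => simp [pair2]
  | tmul a b => simp [pair2]
  | add u v hu hv => simp [pair2, map_add] at hu hv ⊢; rw [hu, hv]; ring

lemma omega_rid {K A : Type*} [Field K] [AddCommGroup A] [Module K A]
    (ω : A →ₗ[K] A →ₗ[K] K) (z : A) (g : Dual K A) (w : A ⊗[K] A) :
    ω ((TensorProduct.rid K A) ((lTensor A g) w)) z = pair2 (ω.flip z) g w := by
  induction w using TensorProduct.induction_on with
  | zero => simp [pair2]
  | tmul a b => simp [pair2]; ring
  | add u v hu hv => simp [pair2, map_add] at hu hv ⊢; rw [hu, hv]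

/-- For a dual quasitriangular mock-Lie bialgebra, `ω` is a symplectic form on
`(A, [,]_ω)`. -/
theorem stmt8 {K A : Type*} [Field K] [CharZero K]
    [AddCommGroup A] [Module K A]
    (Δ : A →ₗ[K] A ⊗[K] A) (ω : A →ₗ[K] A →ₗ[K] K)
    (hcocomm : IsCocomm Δ) (hcojac : IsCoJacobi Δ)
    (hskew : ∀ x y : A, ω x y = - ω y x)
    (hybe : ∀ x y z : A,
      pair2 (ω.flip y) (ω.flip z) (Δ x) + pair2 (ω x) (ω y) (Δ z) -
        pair2 (ω x) (ω.flip z) (Δ y) = 0) :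
    ∀ x y z : A,
      ω (brW Δ ω x y) z + ω (brW Δ ω y z) x + ω (brW Δ ω z x) y = 0 := by
  intro x y z
  have hflip : ∀ a : A, ω.flip a = -(ω a) := by
    intro a; ext b; simp [hskew b a]
  -- pair2 in terms of ω only
  have hP : ∀ a b : A, ∀ w : A ⊗[K] A,
      pair2 (ω.flip a) (ω.flip b) w = pair2 (ω a) (ω b) w := by
    intro a b w; rw [hflip, hflip, pair2_neg_left, pair2_neg_right, neg_neg]
  have hPcomm : ∀ f g : Dual K A, ∀ a : A,
      pair2 f g (Δ a) = pair2 g f (Δ a) := by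
    intro f g a
    rw [← hcocomm a, pair2_comm, hcocomm a]
  -- YBE rewritten
  have hY : ∀ x y z : A,
      pair2 (ω y) (ω z) (Δ x) + pair2 (ω x) (ω y) (Δ z) +
        pair2 (ω x) (ω z) (Δ y) = 0 := by
    intro x y z
    have h := hybe x y z
    rw [hP, hflip z, pair2_neg_right, sub_neg_eq_add] at h
    linear_combination h
  simp only [brW, map_sub, LinearMap.sub_apply, omega_rid]
  simp only [hflip, pair2_neg_left, pair2_neg_right, neg_neg, sub_neg_eq_add]
  rw [hPcomm (ω z) (ω y) x, hPcomm (ω z) (ω x) y, hPcomm (ω y) (ω x) z]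
  linear_combination 2 * hY x y z
end

section
/- Let $(\mathcal{A},[~,~],N)$ be a finite-dimensional Nijenhuis mock-Lie algebra with a nondegenerate invariant bilinear form $\mathfrak{B}$ (i.e. $\mathfrak{B}([x,y],z)=\mathfrak{B}(x,[y,z])$), and let $\hat N$ be the adjoint of $N$ with respect to $\mathfrak{B}$ (i.e. $\mathfrak{B}(N(x),y)=\mathfrak{B}(x,\hat N(y))$). Then $\hat N$ is adjoint-admissible to $(\mathcal{A},[~,~],N)$, i.e. $\hat N([N(x),y]) + [x,\hat N^2(y)] = [N(x),\hat N(y)] + \hat N([x,\hat N(y)])$ for all $x,y\in\mathcal{A}$. -/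
/-- The adjoint `N̂` of a Nijenhuis operator `N` with respect to a nondegenerate invariant
bilinear form on a Nijenhuis mock-Lie algebra is adjoint-admissible. -/
theorem stmt13 {K A : Type*} [Field K] [CharZero K]
    [AddCommGroup A] [Module K A] [FiniteDimensional K A]
    (b : A →ₗ[K] A →ₗ[K] A) (N Nhat : A →ₗ[K] A)
    (B : A →ₗ[K] A →ₗ[K] K)
    (hcomm : ∀ x y : A, b x y = b y x)
    (hjac : ∀ x y z : A, b x (b y z) + b y (b z x) + b z (b x y) = 0)
    (hN : ∀ x y : A, b (N x) (N y) + N (N (b x y)) = N (b (N x) y) + N (b x (N y)))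
    (hndl : ∀ x : A, (∀ y : A, B x y = 0) → x = 0)
    (hndr : ∀ y : A, (∀ x : A, B x y = 0) → y = 0)
    (hinv : ∀ x y z : A, B (b x y) z = B x (b y z))
    (hadj : ∀ x y : A, B (N x) y = B x (Nhat y)) :
    ∀ x y : A,
      Nhat (b (N x) y) + b x (Nhat (Nhat y)) =
        b (N x) (Nhat y) + Nhat (b x (Nhat y)) := by
  intro x y
  have key : ∀ z : A, B z (Nhat (b (N x) y) + b x (Nhat (Nhat y)) -
      (b (N x) (Nhat y) + Nhat (b x (Nhat y)))) = 0 := by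
    intro z
    have h1 : B z (Nhat (b (N x) y)) = B (b (N z) (N x)) y := by
      rw [← hadj, hinv]
    have h2 : B z (b x (Nhat (Nhat y))) = B (N (N (b z x))) y := by
      rw [← hinv, ← hadj, ← hadj]
    have h3 : B z (b (N x) (Nhat y)) = B (N (b z (N x))) y := by
      rw [← hinv, ← hadj]
    have h4 : B z (Nhat (b x (Nhat y))) = B (N (b (N z) x)) y := by
      rw [← hadj, ← hinv, ← hadj]
    have h5 := congrArg (fun a => B a y) (hN z x)
    simp only [map_add, LinearMap.add_apply] at h5
    rw [map_sub, map_add, map_add, h1, h2, h3, h4]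
    linear_combination h5
  have h0 := hndr _ key
  exact sub_eq_zero.mp h0
end

section
/- Let $((\mathcal{A}\oplus\mathcal{A}^*,[~,~]_\diamond,N+S^*),(\mathcal{A},N),(\mathcal{A}^*,S^*),\mathfrak{B}_d)$ be a Manin triple of a Nijenhuis mock-Lie algebra associated to $(\mathcal{A},[~,~],N)$ and $(\mathcal{A}^*,[~,~]_{\mathcal{A}^*},S^*)$, where $\mathfrak{B}_d(x+a^*,y+b^*)=\langle a^*,y\rangle+\langle b^*,x\rangle$. Then the adjoint of $N+S^*$ with respect to $\mathfrak{B}_d$ equals $S+N^*$, and $S$ is adjoint-admissible to $(\mathcal{A},[~,~],N)$ while $N^*$ is adjoint-admissible to $(\mathcal{A}^*,[~,~]_{\mathcal{A}^*},S^*)$. -/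
open Module

/-- The canonical pairing form `𝔅_d(x+a^*, y+b^*) = ⟨a^*,y⟩ + ⟨b^*,x⟩` on `A ⊕ A^*`. -/
def Bd {K A : Type*} [Field K] [AddCommGroup A] [Module K A]
    (u v : A × Dual K A) : K :=
  u.2 v.1 + v.2 u.1

/-- For a Manin triple of a Nijenhuis mock-Lie algebra, the adjoint of `N + S^*` with
respect to `𝔅_d` equals `S + N^*`, `S` is adjoint-admissible to `(A,[,],N)` and `N^*`
is adjoint-admissible to `(A^*,[,]_{A^*},S^*)`. -/
theorem stmt14 {K A : Type*} [Field K] [CharZero K]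
    [AddCommGroup A] [Module K A] [FiniteDimensional K A]
    (b : A →ₗ[K] A →ₗ[K] A) (bst : Dual K A →ₗ[K] Dual K A →ₗ[K] Dual K A)
    (N S : A →ₗ[K] A)
    (bd : A × Dual K A → A × Dual K A → A × Dual K A)
    -- `(A,[,],N)` is a Nijenhuis mock-Lie algebra
    (hcomm : ∀ x y : A, b x y = b y x)
    (hjac : ∀ x y z : A, b x (b y z) + b y (b z x) + b z (b x y) = 0)
    (hN : ∀ x y : A, b (N x) (N y) + N (N (b x y)) = N (b (N x) y) + N (b x (N y)))
    -- `(A^*,[,]_{A^*},S^*)` is a Nijenhuis mock-Lie algebra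
    (hcommst : ∀ f g : Dual K A, bst f g = bst g f)
    (hjacst : ∀ f g h : Dual K A,
      bst f (bst g h) + bst g (bst h f) + bst h (bst f g) = 0)
    (hSst : ∀ f g : Dual K A,
      bst (S.dualMap f) (S.dualMap g) + S.dualMap (S.dualMap (bst f g)) =
        S.dualMap (bst (S.dualMap f) g) + S.dualMap (bst f (S.dualMap g)))
    -- `(A ⊕ A^*, [,]_⋄)` is a mock-Lie algebra containing `A` and `A^*` as subalgebras
    (hcommd : ∀ u v : A × Dual K A, bd u v = bd v u)
    (hjacd : ∀ u v w : A × Dual K A, bd u (bd v w) + bd v (bd w u) + bd w (bd u v) = 0)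
    (hsubA : ∀ x y : A, bd (x, 0) (y, 0) = (b x y, 0))
    (hsubAst : ∀ f g : Dual K A, bd (0, f) (0, g) = ((0 : A), bst f g))
    -- `𝔅_d` is invariant
    (hinv : ∀ u v w : A × Dual K A, Bd (bd u v) w = Bd u (bd v w))
    -- `N + S^*` is a Nijenhuis operator on `(A ⊕ A^*, [,]_⋄)`
    (hNd : ∀ u v : A × Dual K A,
      bd (N u.1, S.dualMap u.2) (N v.1, S.dualMap v.2) +
        (N (N (bd u v).1), S.dualMap (S.dualMap (bd u v).2)) =
      (N (bd (N u.1, S.dualMap u.2) v).1, S.dualMap (bd (N u.1, S.dualMap u.2) v).2) +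
      (N (bd u (N v.1, S.dualMap v.2)).1, S.dualMap (bd u (N v.1, S.dualMap v.2)).2)) :
    (∀ u v : A × Dual K A,
        Bd ((N u.1, S.dualMap u.2) : A × Dual K A) v =
          Bd u ((S v.1, N.dualMap v.2) : A × Dual K A)) ∧
    (∀ x y : A,
      S (b (N x) y) + b x (S (S y)) = b (N x) (S y) + S (b x (S y))) ∧
    (∀ f g : Dual K A,
      N.dualMap (bst (S.dualMap f) g) + bst f (N.dualMap (N.dualMap g)) =
        bst (S.dualMap f) (N.dualMap g) + N.dualMap (bst f (N.dualMap g))) := by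
  -- component formulas for mixed products
  have hQ : ∀ (x : A) (g : Dual K A) (y : A), (bd (x, 0) (0, g)).2 y = g (b x y) := by
    intro x g y
    have h := hinv ((y, 0) : A × Dual K A) (x, 0) (0, g)
    rw [hsubA] at h
    simp only [Bd, map_zero, zero_add, add_zero, LinearMap.zero_apply] at h
    rw [hcomm y x] at h
    exact h.symm
  have hP : ∀ (x : A) (g f : Dual K A), f (bd (x, 0) (0, g)).1 = bst g f x := by
    intro x g f
    have h := hinv ((x, 0) : A × Dual K A) (0, g) (0, f)
    rw [hsubAst] at h
    simp only [Bd, map_zero, zero_add, add_zero, LinearMap.zero_apply] at h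
    exact h
  refine ⟨?_, ?_, ?_⟩
  · intro u v
    simp only [Bd, LinearMap.dualMap_apply]
  · intro x y
    rw [← sub_eq_zero, ← Module.forall_dual_apply_eq_zero_iff K]
    intro g
    have h := hNd ((x, 0) : A × Dual K A) ((0 : A), g)
    simp only [map_zero] at h
    have h2 := congrArg Prod.snd h
    simp only [Prod.snd_add] at h2
    have h3 := DFunLike.congr_fun h2 y
    simp only [LinearMap.add_apply, LinearMap.dualMap_apply] at h3
    rw [hQ, hQ, hQ, hQ] at h3
    simp only [LinearMap.dualMap_apply] at h3
    simp only [map_sub, map_add]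
    linear_combination h3
  · intro f g
    apply LinearMap.ext
    intro x
    have h := hNd ((x, 0) : A × Dual K A) ((0 : A), f)
    simp only [map_zero] at h
    have h1 := congrArg Prod.fst h
    simp only [Prod.fst_add] at h1
    have h4 := congrArg g h1
    simp only [map_add] at h4
    have e1 := hP (N x) (S.dualMap f) g
    have e2 := hP x f (N.dualMap (N.dualMap g))
    have e3 := hP (N x) f (N.dualMap g)
    have e4 := hP x (S.dualMap f) (N.dualMap g)
    simp only [LinearMap.dualMap_apply] at e1 e2 e3 e4
    rw [e1, e2, e3, e4] at h4
    simp only [LinearMap.add_apply, LinearMap.dualMap_apply]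
    linear_combination h4
end

section
/- Let $(\mathcal{A},[~,~],N)$ be a finite-dimensional Nijenhuis mock-Lie algebra and $r\in\mathcal{A}\otimes\mathcal{A}$ antisymmetric, with associated linear map $T_r:\mathcal{A}^*\to\mathcal{A}$, $T_r(u^*)=\sum_i\langle u^*,u_i\rangle v_i$ for $r=\sum_i u_i\otimes v_i$. Let $S:\mathcal{A}\to\mathcal{A}$ be linear. Then $r$ is a solution of the $S$-admissible mock-Lie Yang-Baxter equation in $(\mathcal{A},[~,~],N)$ if and only if $T_r$ satisfies $[T_r(x^*),T_r(y^*)] = T_r(\mathrm{ad}^*(T_r(x^*))y^* + \mathrm{ad}^*(T_r(y^*))x^*)$ for all $x^*,y^*\in\mathcal{A}^*$ and $N\circ T_r = T_r\circ S^*$. -/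
open TensorProduct Module

/-- The linear map `T_r : A^* → A` associated to `r = ∑ i, r1 i ⊗ r2 i`,
`T_r(u^*) = ∑ i ⟨u^*, r1 i⟩ r2 i`. -/
noncomputable def Tr {K A ι : Type*} [Field K] [AddCommGroup A] [Module K A]
    [Fintype ι] (r1 r2 : ι → A) (f : Dual K A) : A :=
  ∑ i, f (r1 i) • r2 i

/-- Contraction of the first tensor factor against a dual vector. -/
noncomputable def ctr {K A M : Type*} [Field K] [AddCommGroup A] [Module K A]
    [AddCommGroup M] [Module K M] (f : Dual K A) : A ⊗[K] M →ₗ[K] M :=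
  (TensorProduct.lid K M).toLinearMap ∘ₗ TensorProduct.map f LinearMap.id

@[simp] lemma ctr_tmul {K A M : Type*} [Field K] [AddCommGroup A] [Module K A]
    [AddCommGroup M] [Module K M] (f : Dual K A) (a : A) (m : M) :
    ctr f (a ⊗ₜ[K] m) = f a • m := by
  simp [ctr]

/-- If all contractions of `t : A ⊗ M` against dual vectors of the finite-dimensional
space `A` vanish, then `t = 0`. -/
lemma sep {K A M : Type*} [Field K] [AddCommGroup A] [Module K A]
    [AddCommGroup M] [Module K M] [FiniteDimensional K A] (t : A ⊗[K] M)
    (h : ∀ f : Dual K A, ctr (M := M) f t = 0) : t = 0 := by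
  let e : A ⊗[K] M ≃ₗ[K] (Dual K A →ₗ[K] M) :=
    (TensorProduct.congr (Module.evalEquiv K A) (LinearEquiv.refl K M)).trans
      (dualTensorHomEquiv K (Dual K A) M)
  have key : ∀ (t : A ⊗[K] M) (f : Dual K A), e t f = ctr f t := by
    intro t f
    induction t using TensorProduct.induction_on with
    | zero => simp
    | tmul a m => simp [e]
    | add x y hx hy => simp [map_add, hx, hy]
  have h0 : e t = 0 := LinearMap.ext fun f => by rw [key]; exact h f
  exact (map_eq_zero_iff e e.injective).mp h0

/-- An antisymmetric `r` solves the `S`-admissible mock-Lie Yang-Baxter equation in the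
Nijenhuis mock-Lie algebra `(A,[,],N)` iff `T_r` is an `𝒪`-operator-type map:
`[T_r x^*, T_r y^*] = T_r(ad^*(T_r x^*) y^* + ad^*(T_r y^*) x^*)` and
`N ∘ T_r = T_r ∘ S^*`. -/
theorem stmt15 {K A ι : Type*} [Field K] [CharZero K]
    [AddCommGroup A] [Module K A] [FiniteDimensional K A] [Fintype ι]
    (b : A →ₗ[K] A →ₗ[K] A) (N S : A →ₗ[K] A) (r1 r2 : ι → A)
    (hcomm : ∀ x y : A, b x y = b y x)
    (hjac : ∀ x y z : A, b x (b y z) + b y (b z x) + b z (b x y) = 0)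
    (hN : ∀ x y : A, b (N x) (N y) + N (N (b x y)) = N (b (N x) y) + N (b x (N y)))
    (hanti : (TensorProduct.comm K A A) (∑ i, r1 i ⊗ₜ[K] r2 i) =
      - ∑ i, r1 i ⊗ₜ[K] r2 i) :
    ((∑ i, ∑ j, (b (r1 i) (r1 j)) ⊗ₜ[K] (r2 i ⊗ₜ[K] r2 j) +
      ∑ i, ∑ j, r1 i ⊗ₜ[K] (r1 j ⊗ₜ[K] (b (r2 i) (r2 j))) -
      ∑ i, ∑ j, r1 i ⊗ₜ[K] ((b (r2 i) (r1 j)) ⊗ₜ[K] r2 j) = 0) ∧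
     (∑ i, (N (r1 i)) ⊗ₜ[K] r2 i - ∑ i, r1 i ⊗ₜ[K] (S (r2 i)) = 0) ∧
     (∑ i, (S (r1 i)) ⊗ₜ[K] r2 i - ∑ i, r1 i ⊗ₜ[K] (N (r2 i)) = 0)) ↔
    ((∀ f g : Dual K A,
        b (Tr r1 r2 f) (Tr r1 r2 g) =
          Tr r1 r2 ((b (Tr r1 r2 f)).dualMap g + (b (Tr r1 r2 g)).dualMap f)) ∧
     (∀ f : Dual K A, N (Tr r1 r2 f) = Tr r1 r2 (S.dualMap f))) := by
  -- antisymmetry, in vector and scalar form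
  have hAv : ∀ φ : Dual K A, ∑ i, φ (r2 i) • r1 i = - ∑ i, φ (r1 i) • r2 i := by
    intro φ
    have h' : (∑ i, r2 i ⊗ₜ[K] r1 i) = - ∑ i, r1 i ⊗ₜ[K] r2 i := by
      simpa [map_sum] using hanti
    have := congrArg (ctr (M := A) φ) h'
    simpa [map_sum] using this
  have hA : ∀ φ ψ : Dual K A, ∑ i, φ (r2 i) * ψ (r1 i) = - ∑ i, φ (r1 i) * ψ (r2 i) := by
    intro φ ψ
    have := congrArg ψ (hAv φ)
    simpa [map_sum, map_smul, smul_eq_mul, mul_comm] using this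
  -- key computation for the main YBE component
  have key1 : ∀ f g : Dual K A,
      ctr (M := A) g (ctr (M := A ⊗[K] A) f
        (∑ i, ∑ j, (b (r1 i) (r1 j)) ⊗ₜ[K] (r2 i ⊗ₜ[K] r2 j) +
         ∑ i, ∑ j, r1 i ⊗ₜ[K] (r1 j ⊗ₜ[K] (b (r2 i) (r2 j))) -
         ∑ i, ∑ j, r1 i ⊗ₜ[K] ((b (r2 i) (r1 j)) ⊗ₜ[K] r2 j))) =
      b (Tr r1 r2 f) (Tr r1 r2 g) -
        Tr r1 r2 ((b (Tr r1 r2 f)).dualMap g + (b (Tr r1 r2 g)).dualMap f) := by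
    intro f g
    simp only [map_sub, map_add, map_sum, map_smul, ctr_tmul, Tr, LinearMap.sum_apply,
      LinearMap.smul_apply, LinearMap.dualMap_apply', LinearMap.add_apply, smul_smul,
      add_smul, Finset.sum_add_distrib, LinearMap.coe_comp, Function.comp_apply]
    have e1 : (∑ x : ι, ∑ x_1 : ι, (f ((b (r1 x)) (r1 x_1)) * g (r2 x)) • r2 x_1) =
        - ∑ x : ι, (∑ x_1 : ι, g (r1 x_1) • f ((b (r2 x_1)) (r1 x))) • r2 x := by
      rw [Finset.sum_comm, ← Finset.sum_neg_distrib]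
      refine Finset.sum_congr rfl fun x _ => ?_
      rw [← Finset.sum_smul, ← neg_smul]
      congr 1
      simp only [smul_eq_mul]
      have := hA g (f ∘ₗ (b.flip (r1 x)))
      simp only [LinearMap.coe_comp, Function.comp_apply, LinearMap.flip_apply] at this
      rw [← this]
      exact Finset.sum_congr rfl fun y _ => mul_comm _ _
    have e2 : (∑ x : ι, ∑ x_1 : ι, (f (r1 x) * g (r1 x_1)) • (b (r2 x)) (r2 x_1)) =
        ∑ x : ι, g (r1 x) • ∑ x_1 : ι, f (r1 x_1) • (b (r2 x_1)) (r2 x) := by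
      rw [Finset.sum_comm]
      refine Finset.sum_congr rfl fun x _ => ?_
      rw [Finset.smul_sum]
      exact Finset.sum_congr rfl fun y _ => by rw [smul_smul, mul_comm]
    have e3 : (∑ x : ι, ∑ x_1 : ι, (f (r1 x) * g ((b (r2 x)) (r1 x_1))) • r2 x_1) =
        ∑ x : ι, (∑ x_1 : ι, f (r1 x_1) • g ((b (r2 x_1)) (r1 x))) • r2 x := by
      rw [Finset.sum_comm]
      refine Finset.sum_congr rfl fun x _ => ?_
      rw [← Finset.sum_smul]
      congr 1
    rw [e1, e2, e3]
    abel
  -- key computation for the third component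
  have key3 : ∀ f : Dual K A,
      ctr (M := A) f (∑ i, (S (r1 i)) ⊗ₜ[K] r2 i - ∑ i, r1 i ⊗ₜ[K] (N (r2 i))) =
      Tr r1 r2 (S.dualMap f) - N (Tr r1 r2 f) := by
    intro f
    simp [Tr, map_sum, map_smul, LinearMap.dualMap_apply']
  -- scalar transfer between the second and third components
  have key23 : ∀ f g : Dual K A,
      g (ctr (M := A) f (∑ i, (N (r1 i)) ⊗ₜ[K] r2 i - ∑ i, r1 i ⊗ₜ[K] (S (r2 i)))) =
      f (ctr (M := A) g (∑ i, (S (r1 i)) ⊗ₜ[K] r2 i - ∑ i, r1 i ⊗ₜ[K] (N (r2 i)))) := by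
    intro f g
    simp only [map_sub, map_sum, map_smul, ctr_tmul, smul_eq_mul]
    have h1 := hA g (f ∘ₗ N)
    have h2 := hA (g ∘ₗ S) f
    simp only [LinearMap.coe_comp, Function.comp_apply] at h1 h2
    have e1 : ∑ i, f (N (r1 i)) * g (r2 i) = - ∑ i, g (r1 i) * f (N (r2 i)) := by
      rw [← h1]; exact Finset.sum_congr rfl fun y _ => mul_comm _ _
    have e2 : ∑ i, f (r1 i) * g (S (r2 i)) = - ∑ i, g (S (r1 i)) * f (r2 i) := by
      rw [← h2]; exact Finset.sum_congr rfl fun y _ => mul_comm _ _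
    rw [e1, e2]
    ring
  constructor
  · rintro ⟨h1, h2, h3⟩
    refine ⟨fun f g => ?_, fun f => ?_⟩
    · have hk := key1 f g
      rw [h1] at hk
      simp only [map_zero] at hk
      exact sub_eq_zero.mp hk.symm
    · have hk := key3 f
      rw [h3] at hk
      simp only [map_zero] at hk
      exact (sub_eq_zero.mp hk.symm).symm
  · rintro ⟨h1, h2⟩
    have hE1 : (∑ i, ∑ j, (b (r1 i) (r1 j)) ⊗ₜ[K] (r2 i ⊗ₜ[K] r2 j) +
        ∑ i, ∑ j, r1 i ⊗ₜ[K] (r1 j ⊗ₜ[K] (b (r2 i) (r2 j))) -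
        ∑ i, ∑ j, r1 i ⊗ₜ[K] ((b (r2 i) (r1 j)) ⊗ₜ[K] r2 j)) = 0 := by
      refine sep _ fun f => sep _ fun g => ?_
      rw [key1 f g, ← h1 f g, sub_self]
    have hE3 : (∑ i, (S (r1 i)) ⊗ₜ[K] r2 i - ∑ i, r1 i ⊗ₜ[K] (N (r2 i))) = 0 := by
      refine sep _ fun f => ?_
      rw [key3 f, ← h2 f, sub_self]
    have hE2 : (∑ i, (N (r1 i)) ⊗ₜ[K] r2 i - ∑ i, r1 i ⊗ₜ[K] (S (r2 i))) = 0 := by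
      refine sep _ fun f => ?_
      rw [← Module.forall_dual_apply_eq_zero_iff K]
      intro g
      rw [key23 f g, hE3]
      simp
    exact ⟨hE1, hE2, hE3⟩
end

section
/- Let $(\mathcal{A},[~,~],N)$ be a Nijenhuis mock-Lie algebra, $(V,\rho)$ a representation of $(\mathcal{A},[~,~])$, and $S:\mathcal{A}\to\mathcal{A}$, $\alpha,\beta:V\to V$ linear maps. Then $(\mathcal{A}\oplus V, [~,~]_\star, N+\alpha)$ is a Nijenhuis mock-Lie algebra with $S+\beta$ adjoint-admissible to it if and only if: (a) $(V,\rho,\alpha)$ is a representation of $(\mathcal{A},[~,~],N)$; (b) $S$ is adjoint-admissible to $(\mathcal{A},[~,~],N)$; (c) $\beta(\rho(N(x))v)+\rho(x)\beta^2(v)=\rho(N(x))\beta(v)+\beta(\rho(x)\beta(v))$ for all $x,v$; (d) $\beta(\rho(y)\alpha(u))+\rho(S^2(y))u = \rho(S(y))\alpha(u)+\beta(\rho(S(y))u)$ for all $y\in\mathcal{A}$, $u\in V$. -/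
/-- `(A ⋉_ρ V, N+α)` is a Nijenhuis mock-Lie algebra with `S+β` adjoint-admissible to it
iff `(V,ρ,α)` is a representation of `(A,[,],N)`, `S` is adjoint-admissible to
`(A,[,],N)`, `β` is admissible on `(V,ρ)`, and the mixed compatibility holds. -/
theorem stmt16 {K A V : Type*} [Field K] [CharZero K]
    [AddCommGroup A] [Module K A] [AddCommGroup V] [Module K V]
    (b : A →ₗ[K] A →ₗ[K] A) (N S : A →ₗ[K] A)
    (ρ : A →ₗ[K] V →ₗ[K] V) (α β : V →ₗ[K] V)
    (hcomm : ∀ x y : A, b x y = b y x)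
    (hjac : ∀ x y z : A, b x (b y z) + b y (b z x) + b z (b x y) = 0)
    (hN : ∀ x y : A, b (N x) (N y) + N (N (b x y)) = N (b (N x) y) + N (b x (N y)))
    (hrep : ∀ (x y : A) (v : V), ρ (b x y) v = - ρ x (ρ y v) - ρ y (ρ x v)) :
    ((∀ p q : A × V, starBracket b ρ p q = starBracket b ρ q p) ∧
     (∀ p q r : A × V,
        starBracket b ρ p (starBracket b ρ q r) +
        starBracket b ρ q (starBracket b ρ r p) +
        starBracket b ρ r (starBracket b ρ p q) = 0) ∧
     (∀ p q : A × V,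
        starBracket b ρ (sumMap N α p) (sumMap N α q) +
          sumMap N α (sumMap N α (starBracket b ρ p q)) =
        sumMap N α (starBracket b ρ (sumMap N α p) q) +
          sumMap N α (starBracket b ρ p (sumMap N α q))) ∧
     (∀ p q : A × V,
        sumMap S β (starBracket b ρ (sumMap N α p) q) +
          starBracket b ρ p (sumMap S β (sumMap S β q)) =
        starBracket b ρ (sumMap N α p) (sumMap S β q) +
          sumMap S β (starBracket b ρ p (sumMap S β q)))) ↔
    ((∀ (x : A) (v : V),
        ρ (N x) (α v) + α (α (ρ x v)) = α (ρ (N x) v) + α (ρ x (α v))) ∧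
     (∀ x y : A,
        S (b (N x) y) + b x (S (S y)) = b (N x) (S y) + S (b x (S y))) ∧
     (∀ (x : A) (v : V),
        β (ρ (N x) v) + ρ x (β (β v)) = ρ (N x) (β v) + β (ρ x (β v))) ∧
     (∀ (y : A) (u : V),
        β (ρ y (α u)) + ρ (S (S y)) u = ρ (S y) (α u) + β (ρ (S y) u))) := by
  constructor
  · rintro ⟨h1, h2, h3, h4⟩
    refine ⟨?_, ?_, ?_, ?_⟩
    · intro x v
      have h := congrArg Prod.snd (h3 (x, 0) (0, v))
      simpa [starBracket, sumMap] using h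
    · intro x y
      have h := congrArg Prod.fst (h4 (x, 0) (y, 0))
      simpa [starBracket, sumMap] using h
    · intro x v
      have h := congrArg Prod.snd (h4 (x, 0) (0, v))
      simpa [starBracket, sumMap] using h
    · intro y u
      have h := congrArg Prod.snd (h4 (0, u) (y, 0))
      simpa [starBracket, sumMap] using h
  · rintro ⟨ha, hb, hc, hd⟩
    refine ⟨?_, ?_, ?_, ?_⟩
    · intro p q
      simp only [starBracket, Prod.mk.injEq]
      exact ⟨hcomm _ _, by abel⟩
    · intro p q r
      simp only [starBracket, Prod.mk_add_mk, Prod.mk.injEq, Prod.mk_eq_zero]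
      constructor
      · exact hjac _ _ _
      · simp only [hrep, map_add, map_neg]
        abel
    · intro p q
      simp only [starBracket, sumMap, Prod.mk_add_mk, Prod.mk.injEq]
      refine ⟨hN _ _, ?_⟩
      have h := congrArg₂ (· + ·) (ha p.1 q.2) (ha q.1 p.2)
      simp only [map_add] at h ⊢
      abel_nf at h ⊢
      exact h
    · intro p q
      simp only [starBracket, sumMap, Prod.mk_add_mk, Prod.mk.injEq]
      refine ⟨hb _ _, ?_⟩
      have h := congrArg₂ (· + ·) (hc p.1 q.2) (hd q.1 p.2)
      simp only [map_add] at h ⊢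
      abel_nf at h ⊢
      exact h
end

section
/- Let $(\mathcal{A},\mu,N)$ be a Nijenhuis mock-Lie algebra and $(\mu_t,N_t)$, $(\mu'_t,N'_t)$ two equivalent one-parameter formal deformations with formal isomorphism $\psi_t = \mathrm{id} + \psi_1 t + \cdots$. Then the degree-one terms satisfy $\mu'_1(x,y) = \mu_1(x,y) + \mu(x,\psi_1(y)) + \mu(\psi_1(x),y) - \psi_1(\mu(x,y))$ and $N'_1 = N_1 + N\circ\psi_1 - \psi_1\circ N$; hence the infinitesimals $(\mu_1,N_1)$ and $(\mu'_1,N'_1)$ differ by the coboundary of $\psi_1$. -/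
open Finset

/-- Coefficientwise mock-Lie/Nijenhuis deformation equations plus a degree-one comparison:
the infinitesimals of two equivalent formal deformations of a Nijenhuis mock-Lie algebra
differ by the coboundary of `ψ₁`. -/
theorem stmt19 {K A : Type*} [Field K] [CharZero K]
    [AddCommGroup A] [Module K A]
    (μ μ' : ℕ → (A →ₗ[K] A →ₗ[K] A)) (Nseq Nseq' : ℕ → (A →ₗ[K] A))
    (ψ : ℕ → (A →ₗ[K] A))
    -- `(A, μ 0, Nseq 0)` is a Nijenhuis mock-Lie algebra and both series deform it
    (hbase : μ 0 = μ' 0 ∧ Nseq 0 = Nseq' 0)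
    (hcomm : ∀ n, ∀ x y : A, μ n x y = μ n y x)
    (hcomm' : ∀ n, ∀ x y : A, μ' n x y = μ' n y x)
    (hjac : ∀ n, ∀ x y z : A,
      ∑ i ∈ range (n + 1),
        (μ i x (μ (n - i) y z) + μ i z (μ (n - i) x y) + μ i y (μ (n - i) z x)) = 0)
    (hjac' : ∀ n, ∀ x y z : A,
      ∑ i ∈ range (n + 1),
        (μ' i x (μ' (n - i) y z) + μ' i z (μ' (n - i) x y) + μ' i y (μ' (n - i) z x)) = 0)
    (hnij : ∀ n, ∀ u v : A,
      ∑ i ∈ range (n + 1), ∑ j ∈ range (n + 1 - i),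
        μ i (Nseq j u) (Nseq (n - i - j) v) =
      ∑ i ∈ range (n + 1), ∑ j ∈ range (n + 1 - i),
        (Nseq i (μ j (Nseq (n - i - j) u) v) + Nseq i (μ j u (Nseq (n - i - j) v)) -
          Nseq i (Nseq (n - i - j) (μ j u v))))
    (hnij' : ∀ n, ∀ u v : A,
      ∑ i ∈ range (n + 1), ∑ j ∈ range (n + 1 - i),
        μ' i (Nseq' j u) (Nseq' (n - i - j) v) =
      ∑ i ∈ range (n + 1), ∑ j ∈ range (n + 1 - i),
        (Nseq' i (μ' j (Nseq' (n - i - j) u) v) + Nseq' i (μ' j u (Nseq' (n - i - j) v)) -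
          Nseq' i (Nseq' (n - i - j) (μ' j u v))))
    -- `ψ_t = id + ψ₁ t + ⋯` is a formal isomorphism from `(μ'_t, N'_t)` to `(μ_t, N_t)`
    (hψ0 : ψ 0 = LinearMap.id)
    (hmorph : ∀ n, ∀ x y : A,
      ∑ i ∈ range (n + 1), ψ i (μ' (n - i) x y) =
        ∑ i ∈ range (n + 1), ∑ j ∈ range (n + 1 - i),
          μ i (ψ j x) (ψ (n - i - j) y))
    (hmorphN : ∀ n, ∀ x : A,
      ∑ i ∈ range (n + 1), ψ i (Nseq' (n - i) x) =
        ∑ i ∈ range (n + 1), Nseq i (ψ (n - i) x)) :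
    (∀ x y : A,
      μ' 1 x y = μ 1 x y + μ 0 x (ψ 1 y) + μ 0 (ψ 1 x) y - ψ 1 (μ 0 x y)) ∧
    (∀ x : A, Nseq' 1 x = Nseq 1 x + Nseq 0 (ψ 1 x) - ψ 1 (Nseq 0 x)) := by
  obtain ⟨hb1, hb2⟩ := hbase
  constructor
  · intro x y
    have h := hmorph 1 x y
    simp [Finset.sum_range_succ, hψ0, ← hb1] at h
    linear_combination (norm := module) h
  · intro x
    have h := hmorphN 1 x
    simp [Finset.sum_range_succ, hψ0, ← hb2] at h
    linear_combination (norm := module) h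
end
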